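/- Let T_1, …, T_k be rooted trees and α_1, …, α_k positive integers. Let T_0 be the rooted tree whose root has ∑_j α_j children, such that for each j exactly α_j of the root-child subtrees are isomorphic to T_j. Then for every real number λ, the multiplicity of λ as an adjacency eigenvalue of T_0 is at least ∑_{j=1}^{k} (α_j - 1)·μ(T_j, λ), where μ(T_j, λ) is the multiplicity of λ as an adjacency eigenvalue of T_j. -/

import Mathlib

set_option linter.unusedSectionVars false
set_option linter.unusedVariables false


open Polynomial Matrix

/-- The multiplicity of `lam` as a root of the characteristic polynomial of the
adjacency matrix of the graph `H` (over `ℝ`). -/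
noncomputable def specMul {W : Type} [Fintype W] (H : SimpleGraph W) (lam : ℝ) : ℕ :=
  letI := Classical.decEq W
  letI : DecidableRel H.Adj := Classical.decRel _
  (Matrix.charpoly (Matrix.of fun a b : W => if H.Adj a b then (1 : ℝ) else 0)).rootMultiplicity lam

/-- The relation generating the merged tree `T₀`: a new root (`none`) is joined to the
roots of `α j` disjoint copies of the tree `G j`, for each `j`; inside each copy the
edges are those of the corresponding `G j`. -/
def mergedRel {k : ℕ} (V : Fin k → Type) (G : ∀ j, SimpleGraph (V j)) (r : ∀ j, V j)
    (α : Fin k → ℕ) :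
    Option ((j : Fin k) × (Fin (α j) × V j)) → Option ((j : Fin k) × (Fin (α j) × V j)) → Prop
  | none, some ⟨j, _, v⟩ => v = r j
  | some ⟨j, i, v⟩, some ⟨j', i', v'⟩ => ∃ h : j = j', h ▸ i = i' ∧ (G j').Adj (h ▸ v) v'
  | _, _ => False

/-- The merged rooted tree, as a simple graph. -/
def mergedGraph {k : ℕ} (V : Fin k → Type) (G : ∀ j, SimpleGraph (V j)) (r : ∀ j, V j)
    (α : Fin k → ℕ) : SimpleGraph (Option ((j : Fin k) × (Fin (α j) × V j))) :=
  SimpleGraph.fromRel (mergedRel V G r α)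

noncomputable def adjm {W : Type} [Fintype W] (H : SimpleGraph W) : Matrix W W ℝ :=
  letI : DecidableRel H.Adj := Classical.decRel _
  Matrix.of fun a b : W => if H.Adj a b then (1 : ℝ) else 0

lemma specMul_eq' {W : Type} [Fintype W] [inst : DecidableEq W] (H : SimpleGraph W) (lam : ℝ) :
    specMul H lam = (Matrix.charpoly (adjm H)).rootMultiplicity lam := by
  rw [Subsingleton.elim inst (Classical.decEq W)]
  rfl

lemma adjm_pos {W : Type} [Fintype W] {H : SimpleGraph W} {a b : W} (h : H.Adj a b) :
    adjm H a b = 1 := by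
  unfold adjm
  simp only [Matrix.of_apply]
  exact if_pos h

lemma adjm_neg {W : Type} [Fintype W] {H : SimpleGraph W} {a b : W} (h : ¬ H.Adj a b) :
    adjm H a b = 0 := by
  unfold adjm
  simp only [Matrix.of_apply]
  exact if_neg h


lemma my_charpoly_conj {n R : Type*} [Fintype n] [DecidableEq n] [CommRing R]
    (P B Q : Matrix n n R) (h1 : P * Q = 1) :
    (P * B * Q).charpoly = B.charpoly := by
  let Φ := (C : R →+* R[X]).mapMatrix (m := n)
  have hPQ : Φ P * Φ Q = 1 := by rw [← _root_.map_mul, h1, _root_.map_one]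
  have hkey : charmatrix (P * B * Q) = Φ P * charmatrix B * Φ Q := by
    rw [charmatrix, charmatrix, mul_sub, sub_mul]
    congr 1
    · have hc : Commute (scalar n (X : R[X])) (Φ Q) :=
        scalar_commute _ (fun r' => Commute.all _ _) _
      rw [mul_assoc, hc.eq, ← mul_assoc, hPQ, one_mul]
    · show (C : R →+* R[X]).mapMatrix (P * B * Q) = Φ P * (C : R →+* R[X]).mapMatrix B * Φ Q
      rw [_root_.map_mul, _root_.map_mul]
  rw [Matrix.charpoly, Matrix.charpoly, hkey, det_mul, det_mul]
  have hd : (Φ P).det * (Φ Q).det = 1 := by rw [← det_mul, hPQ, det_one]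
  calc (Φ P).det * (charmatrix B).det * (Φ Q).det
      = (charmatrix B).det * ((Φ P).det * (Φ Q).det) := by ring
    _ = (charmatrix B).det := by rw [hd, mul_one]


namespace MergedAux

variable {k : ℕ} (V : Fin k → Type) (G : ∀ j, SimpleGraph (V j)) (r : ∀ j, V j)
    (α : Fin k → ℕ)

abbrev Ety := (j : Fin k) × (Fin (α j) × V j)
abbrev Wty := Option ((j : Fin k) × V j)
abbrev Uty := (j : Fin k) × (Fin (α j - 1) × V j)
abbrev Nty := Wty V ⊕ Uty V α

variable (hα : ∀ j, 0 < α j)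

/-- the nice direction of the reindexing equivalence -/
def fE : Nty V α → Option (Ety V α)
  | .inl none => none
  | .inl (some ⟨j, v⟩) => some ⟨j, ⟨0, hα j⟩, v⟩
  | .inr ⟨j, i, v⟩ => some ⟨j, ⟨(i : ℕ) + 1, by have := i.isLt; omega⟩, v⟩

def gE : Option (Ety V α) → Nty V α
  | none => .inl none
  | some ⟨j, i, v⟩ =>
      if h : (i : ℕ) = 0 then .inl (some ⟨j, v⟩)
      else .inr ⟨j, ⟨(i : ℕ) - 1, by have := i.isLt; omega⟩, v⟩

def eE : Option (Ety V α) ≃ Nty V α where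
  toFun := gE V α
  invFun := fE V α hα
  left_inv x := by
    rcases x with _ | ⟨j, i, v⟩
    · rfl
    · by_cases h : (i : ℕ) = 0
      · simp [gE, fE, h, Fin.ext_iff]
      · simp only [gE, fE, h, dif_neg, not_false_iff]
        simp [Fin.ext_iff]
        omega
  right_inv x := by
    rcases x with (_ | ⟨j, v⟩) | ⟨j, i, v⟩
    · rfl
    · simp [gE, fE]
    · simp [gE, fE]

lemma adj_none_some (j i v) :
    (mergedGraph V G r α).Adj none (some ⟨j, i, v⟩) ↔ v = r j := by
  rw [mergedGraph, SimpleGraph.fromRel_adj]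
  constructor
  · rintro ⟨-, h | h⟩
    · exact h
    · exact h.elim
  · intro h
    exact ⟨by simp, Or.inl h⟩

lemma adj_some_some (j j' : Fin k) (i : Fin (α j)) (i' : Fin (α j')) (v : V j) (v' : V j') :
    (mergedGraph V G r α).Adj (some ⟨j, i, v⟩) (some ⟨j', i', v'⟩) ↔
      ∃ h : j = j', h ▸ i = i' ∧ (G j').Adj (h ▸ v) v' := by
  rw [mergedGraph, SimpleGraph.fromRel_adj]
  constructor
  · rintro ⟨-, h | h⟩
    · exact h
    · obtain ⟨h, hi, hadj⟩ := h
      subst h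
      exact ⟨rfl, hi.symm, hadj.symm⟩
  · rintro ⟨h, hi, hadj⟩
    subst h
    refine ⟨?_, Or.inl ⟨rfl, hi, hadj⟩⟩
    simp only [ne_eq, Option.some.injEq, Sigma.mk.inj_iff, heq_eq_eq, Prod.mk.injEq, true_and]
    rintro ⟨-, h2⟩
    exact (G j).irrefl (h2 ▸ hadj)

section Matrices
variable [∀ j, Fintype (V j)]

attribute [local instance] Classical.propDecidable

noncomputable def Bm : Matrix (Nty V α) (Nty V α) ℝ :=
  reindex (eE V α hα) (eE V α hα) (adjm (mergedGraph V G r α))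

lemma Bm_apply (x y) :
    Bm V G r α hα x y = adjm (mergedGraph V G r α) (fE V α hα x) (fE V α hα y) := rfl

lemma Bm_s_none (j v) :
    Bm V G r α hα (.inl (some ⟨j, v⟩)) (.inl none) = (if v = r j then 1 else 0 : ℝ) := by
  rw [Bm_apply]
  show adjm (mergedGraph V G r α) (some ⟨j, ⟨0, hα j⟩, v⟩) none = _
  by_cases h : v = r j
  · rw [if_pos h, adjm_pos (((mergedGraph V G r α).adj_comm _ _).mp
      ((adj_none_some V G r α j _ v).mpr h))]
  · rw [if_neg h, adjm_neg]
    intro hadj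
    exact h ((adj_none_some V G r α j _ v).mp (((mergedGraph V G r α).adj_comm _ _).mp hadj))

lemma Bm_t_none (j i v) :
    Bm V G r α hα (.inr ⟨j, i, v⟩) (.inl none) = (if v = r j then 1 else 0 : ℝ) := by
  rw [Bm_apply]
  show adjm (mergedGraph V G r α) (some ⟨j, _, v⟩) none = _
  by_cases h : v = r j
  · rw [if_pos h, adjm_pos (((mergedGraph V G r α).adj_comm _ _).mp
      ((adj_none_some V G r α j _ v).mpr h))]
  · rw [if_neg h, adjm_neg]
    intro hadj
    exact h ((adj_none_some V G r α j _ v).mp (((mergedGraph V G r α).adj_comm _ _).mp hadj))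

lemma Bm_s_s (j v j' v') :
    Bm V G r α hα (.inl (some ⟨j, v⟩)) (.inl (some ⟨j', v'⟩)) =
      (if h : j = j' then adjm (G j') (h ▸ v) v' else 0 : ℝ) := by
  rw [Bm_apply]
  show adjm (mergedGraph V G r α) (some ⟨j, ⟨0, hα j⟩, v⟩) (some ⟨j', ⟨0, hα j'⟩, v'⟩) = _
  by_cases h : j = j'
  · subst h
    rw [dif_pos rfl]
    by_cases hadj : (G j).Adj v v'
    · rw [adjm_pos ((adj_some_some V G r α j j _ _ v v').mpr ⟨rfl, rfl, hadj⟩),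
        adjm_pos hadj]
    · rw [adjm_neg hadj, adjm_neg]
      intro hc
      obtain ⟨h2, -, h3⟩ := (adj_some_some V G r α j j _ _ v v').mp hc
      exact hadj h3
  · rw [dif_neg h, adjm_neg]
    intro hc
    obtain ⟨h2, -, -⟩ := (adj_some_some V G r α j j' _ _ v v').mp hc
    exact h h2

lemma Bm_s_t (j v j' i' v') :
    Bm V G r α hα (.inl (some ⟨j, v⟩)) (.inr ⟨j', i', v'⟩) = 0 := by
  rw [Bm_apply]
  show adjm (mergedGraph V G r α) (some ⟨j, ⟨0, hα j⟩, v⟩)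
    (some ⟨j', ⟨(i' : ℕ) + 1, _⟩, v'⟩) = 0
  rw [adjm_neg]
  intro hc
  obtain ⟨h2, hi, -⟩ := (adj_some_some V G r α j j' _ _ v v').mp hc
  subst h2
  simp [Fin.ext_iff] at hi

lemma Bm_t_s (j i v j' v') :
    Bm V G r α hα (.inr ⟨j, i, v⟩) (.inl (some ⟨j', v'⟩)) = 0 := by
  rw [Bm_apply]
  show adjm (mergedGraph V G r α) (some ⟨j, ⟨(i : ℕ) + 1, _⟩, v⟩)
    (some ⟨j', ⟨0, hα j'⟩, v'⟩) = 0
  rw [adjm_neg]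
  intro hc
  obtain ⟨h2, hi, -⟩ := (adj_some_some V G r α j j' _ _ v v').mp hc
  subst h2
  simp [Fin.ext_iff] at hi

lemma Bm_t_t (j i v j' i' v') :
    Bm V G r α hα (.inr ⟨j, i, v⟩) (.inr ⟨j', i', v'⟩) =
      (if h : j = j' then (if h ▸ i = i' then adjm (G j') (h ▸ v) v' else 0) else 0 : ℝ) := by
  rw [Bm_apply]
  show adjm (mergedGraph V G r α) (some ⟨j, ⟨(i : ℕ) + 1, _⟩, v⟩)
    (some ⟨j', ⟨(i' : ℕ) + 1, _⟩, v'⟩) = _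
  by_cases h : j = j'
  · subst h
    rw [dif_pos rfl]
    by_cases hi : i = i'
    · subst hi
      rw [if_pos rfl]
      by_cases hadj : (G j).Adj v v'
      · rw [adjm_pos ((adj_some_some V G r α j j _ _ v v').mpr ⟨rfl, rfl, hadj⟩),
          adjm_pos hadj]
      · rw [adjm_neg hadj, adjm_neg]
        intro hc
        obtain ⟨hh, -, h3⟩ := (adj_some_some V G r α j j _ _ v v').mp hc
        exact hadj h3
    · rw [if_neg hi, adjm_neg]
      intro hc
      obtain ⟨hh, h2, -⟩ := (adj_some_some V G r α j j _ _ v v').mp hc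
      simp only [Fin.ext_iff] at h2
      exact hi (Fin.ext (by omega))
  · rw [dif_neg h, adjm_neg]
    intro hc
    obtain ⟨h2, -, -⟩ := (adj_some_some V G r α j j' _ _ v v').mp hc
    exact h h2

/-- The nilpotent "column operation" matrix. -/
noncomputable def NN : Matrix (Nty V α) (Nty V α) ℝ :=
  Matrix.of fun x y =>
    match x with
    | .inr ⟨j, _, v⟩ => if y = .inl (some ⟨j, v⟩) then (1 : ℝ) else 0
    | _ => 0

lemma NN_inl (w y) : NN V α (.inl w) y = 0 := rfl

lemma NN_inr (j i v y) :
    NN V α (.inr ⟨j, i, v⟩) y = if y = .inl (some ⟨j, v⟩) then (1 : ℝ) else 0 := rfl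

lemma NN_mul_apply (Cm : Matrix (Nty V α) (Nty V α) ℝ) (j i v y) :
    (NN V α * Cm) (.inr ⟨j, i, v⟩) y = Cm (.inl (some ⟨j, v⟩)) y := by
  rw [mul_apply]
  rw [Finset.sum_eq_single_of_mem (Sum.inl (some ⟨j, v⟩)) (Finset.mem_univ _)]
  · rw [NN_inr, if_pos rfl, one_mul]
  · intro b _ hb
    rw [NN_inr, if_neg (fun h => hb h), zero_mul]

lemma NN_mul_apply_inl (Cm : Matrix (Nty V α) (Nty V α) ℝ) (w y) :
    (NN V α * Cm) (.inl w) y = 0 := by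
  rw [mul_apply]
  exact Finset.sum_eq_zero fun z _ => by rw [NN_inl, zero_mul]

lemma mul_NN_none (Cm : Matrix (Nty V α) (Nty V α) ℝ) (x) :
    (Cm * NN V α) x (.inl none) = 0 := by
  rw [mul_apply]
  refine Finset.sum_eq_zero fun z _ => ?_
  rcases z with w | ⟨j, i, v⟩
  · rw [NN_inl, mul_zero]
  · rw [NN_inr, if_neg (by simp), mul_zero]

lemma mul_NN_inr (Cm : Matrix (Nty V α) (Nty V α) ℝ) (x u) :
    (Cm * NN V α) x (.inr u) = 0 := by
  rw [mul_apply]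
  refine Finset.sum_eq_zero fun z _ => ?_
  rcases z with w | ⟨j, i, v⟩
  · rw [NN_inl, mul_zero]
  · rw [NN_inr, if_neg (by simp), mul_zero]

lemma mul_NN_s (Cm : Matrix (Nty V α) (Nty V α) ℝ) (x) (j' : Fin k) (v' : V j') :
    (Cm * NN V α) x (.inl (some ⟨j', v'⟩)) =
      ∑ i' : Fin (α j' - 1), Cm x (.inr ⟨j', i', v'⟩) := by
  rw [mul_apply, Fintype.sum_sum_type]
  have h1 : ∀ w : Wty V, Cm x (.inl w) * NN V α (.inl w) (.inl (some ⟨j', v'⟩)) = 0 :=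
    fun w => by rw [NN_inl, mul_zero]
  rw [Finset.sum_congr rfl (fun w _ => h1 w), Finset.sum_const_zero, zero_add]
  set ι : Fin (α j' - 1) → Uty V α := fun i' => ⟨j', i', v'⟩ with hι
  have hinj : Function.Injective ι := by
    intro a b hab
    simpa [hι, Fin.ext_iff] using hab
  rw [← Finset.sum_subset (Finset.subset_univ ((Finset.univ : Finset (Fin (α j' - 1))).image ι))]
  · rw [Finset.sum_image fun a _ b _ h => hinj h]
    refine Finset.sum_congr rfl fun i' _ => ?_
    rw [NN_inr, if_pos rfl, mul_one]
  · intro u _ hu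
    rcases u with ⟨j1, i1, v1⟩
    rw [NN_inr, if_neg, mul_zero]
    intro hc
    simp only [Sum.inl.injEq, Option.some.injEq, Sigma.mk.inj_iff] at hc
    obtain ⟨h1', h2'⟩ := hc
    subst h1'
    rw [← eq_of_heq h2'] at hu
    exact hu (Finset.mem_image.mpr ⟨i1, Finset.mem_univ _, rfl⟩)

noncomputable def Cm : Matrix (Nty V α) (Nty V α) ℝ :=
  Bm V G r α hα + Bm V G r α hα * NN V α

noncomputable def Mm : Matrix (Nty V α) (Nty V α) ℝ :=
  Cm V G r α hα - NN V α * Cm V G r α hα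

lemma sum_Bm_t (j : Fin k) (i : Fin (α j - 1)) (v : V j) (j' : Fin k) (v' : V j') :
    ∑ i' : Fin (α j' - 1), Bm V G r α hα (.inr ⟨j, i, v⟩) (.inr ⟨j', i', v'⟩)
      = if h : j = j' then adjm (G j') (h ▸ v) v' else 0 := by
  by_cases h : j = j'
  · subst h
    rw [dif_pos rfl]
    have key : ∀ i' : Fin (α j - 1), Bm V G r α hα (.inr ⟨j, i, v⟩) (.inr ⟨j, i', v'⟩)
        = if i = i' then adjm (G j) v v' else 0 := fun i' => by
      rw [Bm_t_t, dif_pos rfl]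
    rw [Finset.sum_congr rfl (fun i' _ => key i'), Finset.sum_ite_eq]
    simp
  · rw [dif_neg h]
    exact Finset.sum_eq_zero fun i' _ => by rw [Bm_t_t, dif_neg h]

lemma Mm_t_none (j i v) : Mm V G r α hα (.inr ⟨j, i, v⟩) (.inl none) = 0 := by
  rw [Mm, Matrix.sub_apply, NN_mul_apply, Cm, Matrix.add_apply, Matrix.add_apply, mul_NN_none, mul_NN_none,
    add_zero, add_zero, Bm_t_none, Bm_s_none, sub_self]

lemma Mm_t_s (j : Fin k) (i : Fin (α j - 1)) (v : V j) (j' : Fin k) (v' : V j') :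
    Mm V G r α hα (.inr ⟨j, i, v⟩) (.inl (some ⟨j', v'⟩)) = 0 := by
  rw [Mm, Matrix.sub_apply, NN_mul_apply, Cm, Matrix.add_apply, Matrix.add_apply, mul_NN_s, mul_NN_s,
    Bm_t_s, Bm_s_s, sum_Bm_t]
  have hz : ∑ i' : Fin (α j' - 1), Bm V G r α hα (.inl (some ⟨j, v⟩)) (.inr ⟨j', i', v'⟩) = 0 :=
    Finset.sum_eq_zero fun i' _ => Bm_s_t V G r α hα j v j' i' v'
  rw [hz]
  ring

lemma Mm_t_t (j : Fin k) (i : Fin (α j - 1)) (v : V j) (j' : Fin k) (i' : Fin (α j' - 1))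
    (v' : V j') :
    Mm V G r α hα (.inr ⟨j, i, v⟩) (.inr ⟨j', i', v'⟩) =
      Bm V G r α hα (.inr ⟨j, i, v⟩) (.inr ⟨j', i', v'⟩) := by
  rw [Mm, Matrix.sub_apply, NN_mul_apply, Cm, Matrix.add_apply, Matrix.add_apply, mul_NN_inr, mul_NN_inr,
    add_zero, add_zero, Bm_s_t, sub_zero]

lemma NN_sq : NN V α * NN V α = 0 := by
  ext x y
  rcases x with w | ⟨j, i, v⟩
  · rw [NN_mul_apply_inl, Matrix.zero_apply]
  · rw [NN_mul_apply, NN_inl, Matrix.zero_apply]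

lemma Mm_eq_conj :
    Mm V G r α hα = (1 - NN V α) * Bm V G r α hα * (1 + NN V α) := by
  rw [Mm, Cm]
  noncomm_ring

lemma one_sub_mul_one_add : (1 - NN V α) * (1 + NN V α) = 1 := by
  have h : (1 - NN V α) * (1 + NN V α) = 1 - NN V α * NN V α := by noncomm_ring
  rw [h, NN_sq, sub_zero]

lemma charpoly_Mm : (Mm V G r α hα).charpoly = (adjm (mergedGraph V G r α)).charpoly := by
  rw [Mm_eq_conj, my_charpoly_conj _ _ _ (one_sub_mul_one_add V α), Bm,
    Matrix.charpoly_reindex]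

noncomputable def bfun : Nty V α → ℕ
  | .inl _ => 0
  | .inr ⟨j, i, _⟩ => (Fintype.equivFin ((j : Fin k) × Fin (α j - 1)) ⟨j, i⟩ : ℕ) + 1

lemma bfun_bt : (Mm V G r α hα).BlockTriangular (bfun V α) := by
  intro x y hlt
  rcases x with w | ⟨j, i, v⟩
  · exact absurd hlt (Nat.not_lt_zero _)
  · rcases y with (_ | ⟨j', v'⟩) | ⟨j', i', v'⟩
    · exact Mm_t_none V G r α hα j i v
    · exact Mm_t_s V G r α hα j i v j' v'
    · rw [Mm_t_t, Bm_t_t]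
      by_cases h : j = j'
      · subst h
        rw [dif_pos rfl]
        by_cases hi : i = i'
        · subst hi
          exact absurd hlt (lt_irrefl _)
        · rw [if_neg hi]
      · rw [dif_neg h]

noncomputable def blockEquiv (p : (j : Fin k) × Fin (α j - 1)) :
    V p.1 ≃ {x : Nty V α //
      bfun V α x = (Fintype.equivFin ((j : Fin k) × Fin (α j - 1)) p : ℕ) + 1} :=
  Equiv.ofBijective (fun v => ⟨.inr ⟨p.1, p.2, v⟩, rfl⟩) (by
    constructor
    · intro a b hab
      simpa using congrArg Subtype.val hab
    · rintro ⟨x, hx⟩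
      rcases x with w | ⟨j, i, v⟩
      · rcases w with _ | _ <;> simp [bfun] at hx
      · have he : (⟨j, i⟩ : (j : Fin k) × Fin (α j - 1)) = p :=
          (Fintype.equivFin _).injective (by
            have : (Fintype.equivFin ((j : Fin k) × Fin (α j - 1)) ⟨j, i⟩ : ℕ) + 1
                = (Fintype.equivFin _ p : ℕ) + 1 := hx
            exact Fin.ext (by omega))
        subst he
        exact ⟨v, rfl⟩)

lemma block_repr (p : (j : Fin k) × Fin (α j - 1)) :
    adjm (G p.1) =
      reindex (blockEquiv V α p).symm (blockEquiv V α p).symm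
        ((Mm V G r α hα).toSquareBlock (bfun V α)
          ((Fintype.equivFin ((j : Fin k) × Fin (α j - 1)) p : ℕ) + 1)) := by
  ext v v'
  rw [reindex_apply, submatrix_apply, Equiv.symm_symm]
  show adjm (G p.1) v v' = (Mm V G r α hα).toSquareBlock (bfun V α) _
    (blockEquiv V α p v) (blockEquiv V α p v')
  rw [Matrix.toSquareBlock_def]
  show adjm (G p.1) v v' = Mm V G r α hα (.inr ⟨p.1, p.2, v⟩) (.inr ⟨p.1, p.2, v'⟩)
  rw [Mm_t_t, Bm_t_t, dif_pos rfl, if_pos rfl]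

lemma charpoly_block (p : (j : Fin k) × Fin (α j - 1)) :
    ((Mm V G r α hα).toSquareBlock (bfun V α)
        ((Fintype.equivFin ((j : Fin k) × Fin (α j - 1)) p : ℕ) + 1)).charpoly
      = (adjm (G p.1)).charpoly := by
  rw [block_repr V G r α hα p, Matrix.charpoly_reindex]

end Matrices

end MergedAux


set_option maxHeartbeats 1000000 in
theorem stmt_18 {k : ℕ} (V : Fin k → Type) [∀ j, Fintype (V j)]
    (G : ∀ j, SimpleGraph (V j)) (hT : ∀ j, (G j).IsTree) (r : ∀ j, V j)
    (α : Fin k → ℕ) (hα : ∀ j, 0 < α j) (lam : ℝ) :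
    ∑ j, (α j - 1) * specMul (G j) lam ≤ specMul (mergedGraph V G r α) lam := by
  classical
  open MergedAux in
  rw [specMul_eq']
  have hdvd : ∀ T : Finset ((j : Fin k) × Fin (α j - 1)),
      (∀ p ∈ T, Nonempty (V p.1)) →
      (X - C lam) ^ (∑ p ∈ T, specMul (G p.1) lam)
        ∣ (adjm (mergedGraph V G r α)).charpoly := by
    intro T hTne
    rw [← charpoly_Mm V G r α hα, (bfun_bt V G r α hα).charpoly]
    have hinj : ∀ a ∈ T, ∀ b ∈ T,
        (Fintype.equivFin ((j : Fin k) × Fin (α j - 1)) a : ℕ) + 1 =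
          (Fintype.equivFin ((j : Fin k) × Fin (α j - 1)) b : ℕ) + 1 → a = b := by
      intro a _ b _ hab
      exact (Fintype.equivFin _).injective (Fin.ext (by omega))
    have h1 : (X - C lam) ^ (∑ p ∈ T, specMul (G p.1) lam)
        = ∏ p ∈ T, (X - C lam) ^ specMul (G p.1) lam :=
      (Finset.prod_pow_eq_pow_sum T _ _).symm
    have h2 : ∏ p ∈ T, (X - C lam) ^ specMul (G p.1) lam
        ∣ ∏ p ∈ T, ((Mm V G r α hα).toSquareBlock (bfun V α)
            ((Fintype.equivFin ((j : Fin k) × Fin (α j - 1)) p : ℕ) + 1)).charpoly := by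
      refine Finset.prod_dvd_prod_of_dvd _ _ (fun p _ => ?_)
      rw [charpoly_block V G r α hα p, specMul_eq']
      exact Polynomial.pow_rootMultiplicity_dvd _ _
    have h3 : ∏ a ∈ T.image
              (fun p => (Fintype.equivFin ((j : Fin k) × Fin (α j - 1)) p : ℕ) + 1),
            ((Mm V G r α hα).toSquareBlock (bfun V α) a).charpoly
        = ∏ p ∈ T, ((Mm V G r α hα).toSquareBlock (bfun V α)
            ((Fintype.equivFin ((j : Fin k) × Fin (α j - 1)) p : ℕ) + 1)).charpoly :=
      Finset.prod_image hinj
    have h4 : ∏ a ∈ T.image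
              (fun p => (Fintype.equivFin ((j : Fin k) × Fin (α j - 1)) p : ℕ) + 1),
            ((Mm V G r α hα).toSquareBlock (bfun V α) a).charpoly
        ∣ ∏ a ∈ Finset.image (bfun V α) Finset.univ,
            ((Mm V G r α hα).toSquareBlock (bfun V α) a).charpoly := by
      refine Finset.prod_dvd_prod_of_subset _ _ _ ?_
      intro a ha
      obtain ⟨p, hpT, rfl⟩ := Finset.mem_image.mp ha
      obtain ⟨v⟩ := hTne p hpT
      exact Finset.mem_image.mpr ⟨.inr ⟨p.1, p.2, v⟩, Finset.mem_univ _, rfl⟩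
    rw [h1]
    refine dvd_trans ?_ h4
    rw [h3]
    exact h2
  set T : Finset ((j : Fin k) × Fin (α j - 1)) :=
    Finset.univ.filter (fun p => Nonempty (V p.1)) with hT'
  have hle : ∑ p ∈ T, specMul (G p.1) lam
      ≤ ((adjm (mergedGraph V G r α)).charpoly).rootMultiplicity lam :=
    (Polynomial.le_rootMultiplicity_iff (Matrix.charpoly_monic _).ne_zero).mpr
      (hdvd T (fun p hp => (Finset.mem_filter.mp hp).2))
  have hTfull : ∑ p ∈ T, specMul (G p.1) lam
      = ∑ p : (j : Fin k) × Fin (α j - 1), specMul (G p.1) lam := by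
    refine Finset.sum_filter_of_ne ?_
    intro p _ hne
    by_contra hemp
    have : IsEmpty (V p.1) := not_nonempty_iff.mp hemp
    apply hne
    rw [specMul_eq', Matrix.charpoly, Matrix.det_isEmpty]
    exact Polynomial.rootMultiplicity_eq_zero (by simp [Polynomial.IsRoot])
  have hsum : ∑ p : (j : Fin k) × Fin (α j - 1), specMul (G p.1) lam
      = ∑ j, (α j - 1) * specMul (G j) lam := by
    rw [← Finset.univ_sigma_univ, Finset.sum_sigma]
    refine Finset.sum_congr rfl fun j _ => ?_
    have hc : ∀ s : Fin (α j - 1),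
        specMul (G (⟨j, s⟩ : (j : Fin k) × Fin (α j - 1)).1) lam = specMul (G j) lam :=
      fun _ => rfl
    rw [Finset.sum_congr rfl fun s _ => hc s, Finset.sum_const, Finset.card_univ,
      Fintype.card_fin, smul_eq_mul]
  rw [← hsum, ← hTfull]
  exact hle
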